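/- Let (Aⁿ,∂) be a metric space with ∂ bounded by 1, D ⊆ Aⁿ nonempty, P(x̄) = ∂(x̄,D) the distance function to D with range in [0,1], and α : [0,1] → [0,1] continuous increasing with α(0)=0 and ∂(x̄,D) ≤ α(P(x̄)) for all x̄. Define H(x̄) = inf over ȳ of min(α(P(ȳ)) + ∂(x̄,ȳ), 1). Then H(x̄) = ∂(x̄,D) for all x̄ ∈ Aⁿ. -/

import Mathlib

theorem definable_two_implies_one {B : Type*} [MetricSpace B] [Nonempty B]
    (hbound : ∀ x y : B, dist x y ≤ 1)
    (D : Set B) (hD : D.Nonempty)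
    (P : B → ℝ) (hPdist : ∀ x, P x = Metric.infDist x D)
    (hPI : ∀ x, P x ∈ Set.Icc (0:ℝ) 1)
    (α : ℝ → ℝ) (hcont : ContinuousOn α (Set.Icc 0 1))
    (hmono : MonotoneOn α (Set.Icc 0 1)) (hα0 : α 0 = 0)
    (hdom : ∀ x, Metric.infDist x D ≤ α (P x)) :
    ∀ x : B, (⨅ y : B, min (α (P y) + dist x y) 1) = Metric.infDist x D := by
  intro x
  have hinf_le_one : Metric.infDist x D ≤ 1 := by
    obtain ⟨d, hd⟩ := hD
    calc Metric.infDist x D ≤ dist x d := Metric.infDist_le_dist_of_mem hd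
    _ ≤ 1 := hbound x d
  have hbdd : BddBelow (Set.range fun y : B => min (α (P y) + dist x y) 1) := by
    refine ⟨Metric.infDist x D, ?_⟩
    rintro _ ⟨y, rfl⟩
    refine le_min ?_ hinf_le_one
    calc Metric.infDist x D ≤ Metric.infDist y D + dist x y := Metric.infDist_le_infDist_add_dist
      _ ≤ α (P y) + dist x y := add_le_add_left (hdom y) _
  apply le_antisymm
  · refine le_of_forall_pos_le_add fun ε hε => ?_
    obtain ⟨d, hdD, hdlt⟩ := (Metric.infDist_lt_iff hD).1
      (show Metric.infDist x D < Metric.infDist x D + ε by linarith)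
    have hPd : P d = 0 := by rw [hPdist]; exact Metric.infDist_zero_of_mem hdD
    calc (⨅ y : B, min (α (P y) + dist x y) 1) ≤ min (α (P d) + dist x d) 1 :=
          ciInf_le hbdd d
      _ ≤ α (P d) + dist x d := min_le_left _ _
      _ = dist x d := by rw [hPd, hα0, zero_add]
      _ ≤ Metric.infDist x D + ε := le_of_lt hdlt
  · refine le_ciInf fun y => ?_
    refine le_min ?_ hinf_le_one
    calc Metric.infDist x D ≤ Metric.infDist y D + dist x y := Metric.infDist_le_infDist_add_dist
      _ ≤ α (P y) + dist x y := add_le_add_left (hdom y) _
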